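/- For every integer d ≥ 1 and every s ∈ [0, √2], if f(s) ∈ M_d then s ∈ M_d. -/
import Mathlib


noncomputable section

/-- `β = √2 - 1`. -/
def β : ℝ := Real.sqrt 2 - 1

/-- `ω = √2 + 1`. -/
def ω : ℝ := Real.sqrt 2 + 1

/-- The break points `Δ_i`. -/
def Δ (i : ℤ) : ℝ :=
  if i < 0 then β ^ i.natAbs
  else if i = 0 then β
  else Real.sqrt 2 - β ^ i.natAbs

/-- The intervals `I_i`. -/
def Iint (i : ℤ) : Set ℝ :=
  if i < 0 then Set.Ioc (Δ (i - 1)) (Δ i)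
  else if i = 0 then Set.Ioo β 1
  else Set.Ico (Δ i) (Δ (i + 1))

/-- The defining formula of `f` on the interval `I_i`. -/
def fval (i : ℤ) (s : ℝ) : ℝ :=
  if i < 0 then ω ^ (i.natAbs + 1) * (Δ i - s)
  else if i = 0 then ω * (s - β)
  else ω ^ (i.natAbs + 1) * (s - Δ i)

/-- `f` is the renormalization map: `f 0 = f √2 = 0` and on each interval `I_i`
    it is given by the corresponding affine formula. These conditions determine
    `f` uniquely on `[0, √2]`. -/
def IsLuroth (f : ℝ → ℝ) : Prop :=
  f 0 = 0 ∧ f (Real.sqrt 2) = 0 ∧ ∀ i : ℤ, ∀ s ∈ Iint i, f s = fval i s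

/-- `ℚ(√2)` as a subset of `ℝ`. -/
def QSqrt2 : Set ℝ := {x | ∃ a b : ℚ, x = (a : ℝ) + (b : ℝ) * Real.sqrt 2}

/-- `ℤ[√2]` as a subset of `ℝ`. -/
def ZSqrt2 : Set ℝ := {x | ∃ m n : ℤ, x = (m : ℝ) + (n : ℝ) * Real.sqrt 2}

/-- `M_d = {s ∈ [0,√2] : d·s ∈ ℤ[√2]}`. -/
def Mset (d : ℤ) : Set ℝ :=
  {s | s ∈ Set.Icc 0 (Real.sqrt 2) ∧ (d : ℝ) * s ∈ ZSqrt2}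

lemma sqrt2_sq : Real.sqrt 2 * Real.sqrt 2 = 2 := Real.mul_self_sqrt (by norm_num)
lemma one_lt_sqrt2 : (1:ℝ) < Real.sqrt 2 := by nlinarith [sqrt2_sq, Real.sqrt_nonneg 2]
lemma sqrt2_lt_two : Real.sqrt 2 < 2 := by nlinarith [sqrt2_sq, Real.sqrt_nonneg 2]
lemma beta_pos : 0 < β := by unfold β; linarith [one_lt_sqrt2]
lemma beta_lt_one : β < 1 := by unfold β; linarith [sqrt2_lt_two]
lemma beta_omega : β * ω = 1 := by unfold β ω; linear_combination sqrt2_sq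
lemma z_add {x y : ℝ} (hx : x ∈ ZSqrt2) (hy : y ∈ ZSqrt2) : x + y ∈ ZSqrt2 := by
  obtain ⟨m,n,rfl⟩ := hx; obtain ⟨p,q,rfl⟩ := hy
  exact ⟨m+p, n+q, by push_cast; ring⟩
lemma z_mul {x y : ℝ} (hx : x ∈ ZSqrt2) (hy : y ∈ ZSqrt2) : x * y ∈ ZSqrt2 := by
  obtain ⟨m,n,rfl⟩ := hx; obtain ⟨p,q,rfl⟩ := hy
  exact ⟨m*p + 2*n*q, m*q + n*p, by push_cast; linear_combination (n*q : ℝ) * sqrt2_sq⟩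
lemma z_int (m : ℤ) : (m:ℝ) ∈ ZSqrt2 := ⟨m, 0, by push_cast; ring⟩
lemma z_sqrt2 : Real.sqrt 2 ∈ ZSqrt2 := ⟨0, 1, by push_cast; ring⟩
lemma z_neg {x : ℝ} (hx : x ∈ ZSqrt2) : -x ∈ ZSqrt2 := by
  obtain ⟨m,n,rfl⟩ := hx; exact ⟨-m, -n, by push_cast; ring⟩
lemma z_sub {x y : ℝ} (hx : x ∈ ZSqrt2) (hy : y ∈ ZSqrt2) : x - y ∈ ZSqrt2 := by
  rw [sub_eq_add_neg]; exact z_add hx (z_neg hy)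
lemma z_beta : β ∈ ZSqrt2 := ⟨-1, 1, by push_cast; unfold β; ring⟩
lemma z_beta_pow (n : ℕ) : β ^ n ∈ ZSqrt2 := by
  induction n with
  | zero => exact ⟨1, 0, by push_cast; ring⟩
  | succ k ih => rw [pow_succ]; exact z_mul ih z_beta
lemma exists_k {t : ℝ} (h0 : 0 < t) (h1 : t ≤ β) :
    ∃ k : ℕ, 1 ≤ k ∧ β ^ (k+1) < t ∧ t ≤ β ^ k := by
  classical
  have hP : ∃ n, β ^ n < t := exists_pow_lt_of_lt_one h0 beta_lt_one
  set N := Nat.find hP with hNdef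
  have hN : β ^ N < t := Nat.find_spec hP
  have h0N : ¬ β ^ 0 < t := by simp; linarith [beta_lt_one, h1]
  have h1N : ¬ β ^ 1 < t := by simp; linarith
  have hN2 : 2 ≤ N := by
    rcases Nat.lt_or_ge N 2 with h | h
    · interval_cases N
      · exact absurd hN h0N
      · exact absurd hN h1N
    · exact h
  refine ⟨N - 1, by omega, ?_, ?_⟩
  · have : N - 1 + 1 = N := by omega
    rw [this]; exact hN
  · have := Nat.find_min hP (show N - 1 < N by omega)
    linarith [not_lt.mp this]

/-- for every integer `d ≥ 1` and `s ∈ [0,√2]`,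
if `f s ∈ M_d` then `s ∈ M_d`. -/
theorem luroth_Mset_backward_invariant (f : ℝ → ℝ) (hf : IsLuroth f) :
    ∀ d : ℤ, 1 ≤ d → ∀ s ∈ Set.Icc (0 : ℝ) (Real.sqrt 2),
      f s ∈ Mset d → s ∈ Mset d := by
  rintro d hd s hs ⟨-, hz⟩
  obtain ⟨hf0, hf2, hfi⟩ := hf
  refine ⟨hs, ?_⟩
  rcases eq_or_lt_of_le hs.1 with h0 | h0
  · exact ⟨0, 0, by rw [← h0]; push_cast; ring⟩
  rcases eq_or_lt_of_le hs.2 with h2 | h2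
  · rw [h2]; exact z_mul (z_int d) z_sqrt2
  have hpowβω : ∀ m : ℕ, β ^ m * ω ^ m = 1 := fun m => by
    rw [← mul_pow, beta_omega, one_pow]
  rcases le_or_gt s β with hsβ | hsβ
  · -- s ∈ (0, β] : negative index
    obtain ⟨k, hk1, hklt, hkle⟩ := exists_k h0 hsβ
    set i : ℤ := -(k:ℤ) with hi
    have hineg : i < 0 := by omega
    have hna : i.natAbs = k := by omega
    have hna1 : (i-1).natAbs = k + 1 := by omega
    have hΔi : Δ i = β ^ k := by rw [Δ, if_pos hineg, hna]
    have hΔi1 : Δ (i-1) = β ^ (k+1) := by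
      rw [Δ, if_pos (by omega : i - 1 < 0), hna1]
    have hmem : s ∈ Iint i := by
      rw [Iint, if_pos hineg]; exact ⟨hΔi1 ▸ hklt, hΔi ▸ hkle⟩
    have hfs := hfi i s hmem
    rw [fval, if_pos hineg, hna, hΔi] at hfs
    have hseq : (d:ℝ) * s = (d:ℝ) * β^k - β^(k+1) * ((d:ℝ) * f s) := by
      rw [hfs]; linear_combination (d:ℝ) * (β^k - s) * hpowβω (k+1)
    rw [hseq]
    exact z_sub (z_mul (z_int d) (z_beta_pow k)) (z_mul (z_beta_pow (k+1)) hz)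
  rcases lt_or_ge s 1 with hs1 | hs1
  · -- s ∈ (β, 1) : index 0
    have hmem : s ∈ Iint 0 := by
      rw [Iint, if_neg (by omega), if_pos rfl]; exact ⟨hsβ, hs1⟩
    have hfs := hfi 0 s hmem
    rw [fval, if_neg (by omega), if_pos rfl] at hfs
    have hseq : (d:ℝ) * s = (d:ℝ) * β + β * ((d:ℝ) * f s) := by
      rw [hfs]; linear_combination (-(d:ℝ)) * (s - β) * beta_omega
    rw [hseq]
    exact z_add (z_mul (z_int d) z_beta) (z_mul z_beta hz)
  · -- s ∈ [1, √2) : positive index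
    have ht0 : 0 < Real.sqrt 2 - s := by linarith
    have ht1 : Real.sqrt 2 - s ≤ β := by unfold β; linarith
    obtain ⟨k, hk1, hklt, hkle⟩ := exists_k ht0 ht1
    set i : ℤ := (k:ℤ) with hi
    have hipos : ¬ i < 0 := by omega
    have hine : i ≠ 0 := by omega
    have hna : i.natAbs = k := by omega
    have hna1 : (i+1).natAbs = k + 1 := by omega
    have hΔi : Δ i = Real.sqrt 2 - β ^ k := by rw [Δ, if_neg hipos, if_neg hine, hna]
    have hΔi1 : Δ (i+1) = Real.sqrt 2 - β ^ (k+1) := by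
      rw [Δ, if_neg (by omega : ¬ i + 1 < 0), if_neg (by omega : i + 1 ≠ 0), hna1]
    have hmem : s ∈ Iint i := by
      rw [Iint, if_neg hipos, if_neg hine]
      exact ⟨hΔi ▸ (by linarith), hΔi1 ▸ (by linarith)⟩
    have hfs := hfi i s hmem
    rw [fval, if_neg hipos, if_neg hine, hna, hΔi] at hfs
    have hseq : (d:ℝ) * s = (d:ℝ) * (Real.sqrt 2 - β^k) + β^(k+1) * ((d:ℝ) * f s) := by
      rw [hfs]; linear_combination (-(d:ℝ)) * (s - (Real.sqrt 2 - β^k)) * hpowβω (k+1)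
    rw [hseq]
    exact z_add (z_mul (z_int d) (z_sub z_sqrt2 (z_beta_pow k)))
      (z_mul (z_beta_pow (k+1)) hz)
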